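/- Soundness and completeness of KDC45: a modal formula is a theorem of the Hilbert system KDC45 if and only if it is true at every world of every classical Kripke model whose accessibility relation is serial, transitive, and Euclidean and which satisfies the C-propagation condition. -/

import Mathlib

/-- Modal formulas: atoms, negation, conjunction, disjunction, box. -/
inductive Formula : Type where
  | atom : ℕ → Formula
  | neg : Formula → Formula
  | and : Formula → Formula → Formula
  | or : Formula → Formula → Formula
  | box : Formula → Formula

/-- φ → ψ abbreviates ¬φ ∨ ψ. -/
def Formula.imp (φ ψ : Formula) : Formula := .or (.neg φ) ψ

/-- Classical propositional evaluation treating boxed subformulas atomically. -/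
def evalT (v : Formula → Bool) : Formula → Bool
  | .atom n => v (.atom n)
  | .neg φ => ! evalT v φ
  | .and φ ψ => evalT v φ && evalT v ψ
  | .or φ ψ => evalT v φ || evalT v ψ
  | .box φ => v (.box φ)

/-- A classical propositional tautology (boxed subformulas treated as atoms). -/
def Tautology (φ : Formula) : Prop := ∀ v : Formula → Bool, evalT v φ = true


/-- The Hilbert system KDC45: classical tautologies, schemas K, C, D, 4, 5,
closed under modus ponens and necessitation. -/
inductive KDC45 : Formula → Prop where
  | taut {φ : Formula} : Tautology φ → KDC45 φ
  | axK (φ ψ : Formula) :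
      KDC45 (Formula.imp (.box (Formula.imp φ ψ)) (Formula.imp (.box φ) (.box ψ)))
  | axC (φ : Formula) : KDC45 (Formula.imp φ (.box φ))
  | axD (φ : Formula) : KDC45 (Formula.imp (.box φ) (.neg (.box (.neg φ))))
  | ax4 (φ : Formula) : KDC45 (Formula.imp (.box φ) (.box (.box φ)))
  | ax5 (φ : Formula) : KDC45 (Formula.imp (.neg (.box φ)) (.box (.neg (.box φ))))
  | mp {φ ψ : Formula} : KDC45 (Formula.imp φ ψ) → KDC45 φ → KDC45 ψ
  | nec {φ : Formula} : KDC45 φ → KDC45 (.box φ)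

/-- Kripke satisfaction. -/
def Sat {W : Type} (R : W → W → Prop) (V : W → ℕ → Bool) : W → Formula → Prop
  | w, .atom n => V w n = true
  | w, .neg φ => ¬ Sat R V w φ
  | w, .and φ ψ => Sat R V w φ ∧ Sat R V w ψ
  | w, .or φ ψ => Sat R V w φ ∨ Sat R V w ψ
  | w, .box φ => ∀ w', R w w' → Sat R V w' φ

/-- Erase boxes. -/
def erase : Formula → Formula
  | .atom n => .atom n
  | .neg φ => .neg (erase φ)
  | .and φ ψ => .and (erase φ) (erase ψ)
  | .or φ ψ => .or (erase φ) (erase ψ)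
  | .box φ => erase φ

/-- Propositional evaluation ignoring boxes. -/
def evalP (v : ℕ → Bool) : Formula → Bool
  | .atom n => v n
  | .neg φ => ! evalP v φ
  | .and φ ψ => evalP v φ && evalP v ψ
  | .or φ ψ => evalP v φ || evalP v ψ
  | .box φ => evalP v φ

lemma evalT_erase (v : Formula → Bool) (φ : Formula) :
    evalT v (erase φ) = evalP (fun n => v (.atom n)) φ := by
  induction φ <;> simp [erase, evalT, evalP, *]

lemma Sat_imp {W : Type} (R : W → W → Prop) (V : W → ℕ → Bool) (w : W) (a b : Formula) :
    Sat R V w (Formula.imp a b) ↔ (Sat R V w a → Sat R V w b) := by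
  simp only [Formula.imp, Sat]; tauto

open Classical in
lemma evalT_decide {W : Type} (R : W → W → Prop) (V : W → ℕ → Bool) (w : W) (φ : Formula) :
    evalT (fun ψ => decide (Sat R V w ψ)) φ = true ↔ Sat R V w φ := by
  induction φ with
  | atom n => by_cases hv : V w n = true <;> simp [evalT, Sat, hv]
  | neg φ ih => simp [evalT, Sat, ← Bool.not_eq_true, ih]
  | and φ ψ ih1 ih2 => simp [evalT, Sat, ih1, ih2]
  | or φ ψ ih1 ih2 => simp [evalT, Sat, ih1, ih2]
  | box φ _ => simp [evalT]

lemma soundness {φ : Formula} (h : KDC45 φ) :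
    ∀ (W : Type) (R : W → W → Prop) (V : W → ℕ → Bool),
      (∀ w : W, ∃ w' : W, R w w') →
      (∀ w w' w'' : W, R w w' → R w' w'' → R w w'') →
      (∀ w w' w'' : W, R w w' → R w w'' → R w' w'') →
      (∀ (ψ : Formula) (w w' : W), R w w' → Sat R V w ψ → Sat R V w' ψ) →
      ∀ w : W, Sat R V w φ := by
  induction h with
  | @taut φ ht =>
    intro W R V _ _ _ _ w
    classical
    exact (evalT_decide R V w φ).mp (ht _)
  | axK φ ψ =>
    intro W R V _ _ _ _ w
    rw [Sat_imp, Sat_imp]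
    intro h1 h2 w' hw'
    exact (Sat_imp R V w' φ ψ).mp (h1 w' hw') (h2 w' hw')
  | axC φ =>
    intro W R V _ _ _ pr w
    rw [Sat_imp]
    intro hφ w' hw'
    exact pr φ w w' hw' hφ
  | axD φ =>
    intro W R V ser _ _ _ w
    rw [Sat_imp]
    intro hb
    show ¬ Sat R V w (.box (.neg φ))
    intro hn
    obtain ⟨w', hw'⟩ := ser w
    exact hn w' hw' (hb w' hw')
  | ax4 φ =>
    intro W R V _ tr _ _ w
    rw [Sat_imp]
    intro hb w' hw' w'' hw''
    exact hb w'' (tr w w' w'' hw' hw'')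
  | ax5 φ =>
    intro W R V _ _ eu _ w
    rw [Sat_imp]
    intro hn w' hw'
    show ¬ Sat R V w' (.box φ)
    intro hb
    apply hn
    intro w'' hw''
    exact hb w'' (eu w w' w'' hw' hw'')
  | mp _ _ ih1 ih2 =>
    intro W R V ser tr eu pr w
    exact (Sat_imp R V w _ _).mp (ih1 W R V ser tr eu pr w) (ih2 W R V ser tr eu pr w)
  | nec _ ih =>
    intro W R V ser tr eu pr w w' _
    exact ih W R V ser tr eu pr w'

lemma dtrans {a b c : Formula} (h1 : KDC45 (a.imp b)) (h2 : KDC45 (b.imp c)) :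
    KDC45 (a.imp c) := by
  have t : Tautology ((a.imp b).imp ((b.imp c).imp (a.imp c))) := by
    intro v
    simp only [Formula.imp, evalT]
    cases evalT v a <;> cases evalT v b <;> cases evalT v c <;> rfl
  exact KDC45.mp (KDC45.mp (KDC45.taut t) h1) h2

lemma dcontra {a b : Formula} (h : KDC45 (a.imp b)) :
    KDC45 ((Formula.neg b).imp (.neg a)) := by
  have t : Tautology ((a.imp b).imp ((Formula.neg b).imp (.neg a))) := by
    intro v
    simp only [Formula.imp, evalT]
    cases evalT v a <;> cases evalT v b <;> rfl
  exact KDC45.mp (KDC45.taut t) h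

lemma dand {a b a' b' : Formula} (h1 : KDC45 (a.imp a')) (h2 : KDC45 (b.imp b')) :
    KDC45 ((Formula.and a b).imp (.and a' b')) := by
  have t : Tautology ((a.imp a').imp ((b.imp b').imp ((Formula.and a b).imp (.and a' b')))) := by
    intro v
    simp only [Formula.imp, evalT]
    cases evalT v a <;> cases evalT v a' <;> cases evalT v b <;> cases evalT v b' <;> rfl
  exact KDC45.mp (KDC45.mp (KDC45.taut t) h1) h2

lemma dor {a b a' b' : Formula} (h1 : KDC45 (a.imp a')) (h2 : KDC45 (b.imp b')) :
    KDC45 ((Formula.or a b).imp (.or a' b')) := by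
  have t : Tautology ((a.imp a').imp ((b.imp b').imp ((Formula.or a b).imp (.or a' b')))) := by
    intro v
    simp only [Formula.imp, evalT]
    cases evalT v a <;> cases evalT v a' <;> cases evalT v b <;> cases evalT v b' <;> rfl
  exact KDC45.mp (KDC45.mp (KDC45.taut t) h1) h2

/-- Derived axiom T from C and D. -/
lemma dT (φ : Formula) : KDC45 ((Formula.box φ).imp φ) := by
  have h1 := KDC45.axC (Formula.neg φ)
  have h2 := KDC45.axD φ
  have t : Tautology (((Formula.neg φ).imp (.box (.neg φ))).imp
      (((Formula.box φ).imp (.neg (.box (.neg φ)))).imp ((Formula.box φ).imp φ))) := by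
    intro v
    simp only [Formula.imp, evalT]
    cases evalT v φ <;> cases v (Formula.box (.neg φ)) <;> cases v (Formula.box φ) <;> rfl
  exact KDC45.mp (KDC45.mp (KDC45.taut t) h1) h2

lemma taut_id (a : Formula) : Tautology (a.imp a) := by
  intro v
  simp only [Formula.imp, evalT]
  cases evalT v a <;> rfl

lemma erase_equiv (φ : Formula) :
    KDC45 (φ.imp (erase φ)) ∧ KDC45 ((erase φ).imp φ) := by
  induction φ with
  | atom n => exact ⟨KDC45.taut (taut_id _), KDC45.taut (taut_id _)⟩
  | neg φ ih => exact ⟨dcontra ih.2, dcontra ih.1⟩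
  | and φ ψ ih1 ih2 => exact ⟨dand ih1.1 ih2.1, dand ih1.2 ih2.2⟩
  | or φ ψ ih1 ih2 => exact ⟨dor ih1.1 ih2.1, dor ih1.2 ih2.2⟩
  | box φ ih => exact ⟨dtrans (dT φ) ih.1, dtrans ih.2 (KDC45.axC φ)⟩

lemma sat_one (v : ℕ → Bool) (φ : Formula) :
    ∀ u : Unit, Sat (fun _ _ => True) (fun _ => v) u φ ↔ evalP v φ = true := by
  induction φ with
  | atom n => intro u; simp [Sat, evalP]
  | neg φ ih => intro u; simp [Sat, evalP, ih u]
  | and φ ψ ih1 ih2 => intro u; simp [Sat, evalP, ih1 u, ih2 u]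
  | or φ ψ ih1 ih2 => intro u; simp [Sat, evalP, ih1 u, ih2 u]
  | box φ ih =>
    intro u
    simp only [evalP]
    constructor
    · intro h; exact (ih u).mp (h u trivial)
    · intro h u' _; exact (ih u').mpr h

/-- Soundness and completeness of KDC45: a modal formula is a
theorem of KDC45 iff it is true at every world of every classical Kripke model
whose accessibility relation is serial, transitive, and Euclidean and which
satisfies the C-propagation condition. -/
theorem KDC45_soundness_completeness (φ : Formula) :
    KDC45 φ ↔
      ∀ (W : Type) (R : W → W → Prop) (V : W → ℕ → Bool),
        (∀ w : W, ∃ w' : W, R w w') →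
        (∀ w w' w'' : W, R w w' → R w' w'' → R w w'') →
        (∀ w w' w'' : W, R w w' → R w w'' → R w' w'') →
        (∀ (ψ : Formula) (w w' : W), R w w' → Sat R V w ψ → Sat R V w' ψ) →
        ∀ w : W, Sat R V w φ := by
  constructor
  · intro h W R V ser tr eu pr w
    exact soundness h W R V ser tr eu pr w
  · intro h
    have key : ∀ v : ℕ → Bool, evalP v φ = true := by
      intro v
      have hs := h Unit (fun _ _ => True) (fun _ => v) (fun w => ⟨(), trivial⟩)
        (fun _ _ _ _ _ => trivial) (fun _ _ _ _ _ => trivial)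
        (fun ψ w w' _ hsat => by cases w; cases w'; exact hsat) ()
      exact (sat_one v φ ()).mp hs
    have ht : Tautology (erase φ) := by
      intro v
      rw [evalT_erase]
      exact key _
    exact KDC45.mp (erase_equiv φ).2 (KDC45.taut ht)
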